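/- Let M be a matroid on a ground set S and let A be an n×n matrix with entries in S such that every row and every column of A is a base of M. Then there exists an independent partial transversal of A of size at least ⌈n/2⌉, i.e., a set of cell positions, no two in the same row or column, whose entries form an independent set of size at least ⌈n/2⌉. -/

import Mathlib

/-- `A` is a matroidal Latin square of degree `n` over the matroid `M`:
every row and every column consists of distinct elements forming a base of `M`. -/
def IsMLS {α : Type*} (M : Matroid α) (n : ℕ) (A : Fin n → Fin n → α) : Prop :=
  (∀ i, Function.Injective (A i) ∧ M.IsBase (Set.range (A i))) ∧
  (∀ j, Function.Injective (fun i => A i j) ∧ M.IsBase (Set.range (fun i => A i j)))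

/-- `A` has an independent partial transversal of size `k`: `k` cells, no two in the
same row or column, whose entries are distinct and form an independent set in `M`. -/
def HasIPT {α : Type*} (M : Matroid α) (n : ℕ) (A : Fin n → Fin n → α) (k : ℕ) : Prop :=
  ∃ r c : Fin k → Fin n, Function.Injective r ∧ Function.Injective c ∧
    Function.Injective (fun i => A (r i) (c i)) ∧
    M.Indep (Set.range (fun i => A (r i) (c i)))

lemma snoc_inj {β : Type*} {k : ℕ} {f : Fin k → β} {x : β}
    (hf : Function.Injective f) (hx : x ∉ Set.range f) :
    Function.Injective (Fin.snoc f x : Fin (k+1) → β) := by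
  intro a b hab
  induction a using Fin.lastCases with
  | last =>
    induction b using Fin.lastCases with
    | last => rfl
    | cast b =>
      simp only [Fin.snoc_last, Fin.snoc_castSucc] at hab
      exact absurd ⟨b, hab.symm⟩ hx
  | cast a =>
    induction b using Fin.lastCases with
    | last =>
      simp only [Fin.snoc_last, Fin.snoc_castSucc] at hab
      exact absurd ⟨a, hab⟩ hx
    | cast b =>
      simp only [Fin.snoc_castSucc] at hab
      exact congrArg Fin.castSucc (hf hab)

lemma range_snoc {β : Type*} {k : ℕ} (f : Fin k → β) (x : β) :
    Set.range (Fin.snoc f x : Fin (k+1) → β) = insert x (Set.range f) := by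
  ext y
  constructor
  · rintro ⟨i, rfl⟩
    induction i using Fin.lastCases with
    | last => simp
    | cast i => simp
  · rintro (rfl | ⟨i, rfl⟩)
    · exact ⟨Fin.last k, by simp⟩
    · exact ⟨i.castSucc, by simp⟩

lemma hasIPT_mono {α : Type*} {M : Matroid α} {n : ℕ} {A : Fin n → Fin n → α} {k m : ℕ}
    (h : HasIPT M n A k) (hm : m ≤ k) : HasIPT M n A m := by
  obtain ⟨r, c, hr, hc, he, hI⟩ := h
  refine ⟨r ∘ Fin.castLE hm, c ∘ Fin.castLE hm, hr.comp (Fin.castLE_injective hm),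
    hc.comp (Fin.castLE_injective hm), ?_, ?_⟩
  · exact he.comp (Fin.castLE_injective hm)
  · refine hI.subset ?_
    rintro _ ⟨i, rfl⟩
    exact ⟨Fin.castLE hm i, rfl⟩

theorem stmt_3 {α : Type*} (M : Matroid α) (n : ℕ) (A : Fin n → Fin n → α)
    (hA : IsMLS M n A) : HasIPT M n A ((n + 1) / 2) := by
  classical
  have h0 : HasIPT M n A 0 :=
    ⟨Fin.elim0, Fin.elim0, fun a => a.elim0, fun a => a.elim0, fun a => a.elim0,
      by simp [Set.range_eq_empty]⟩
  set k := Nat.findGreatest (HasIPT M n A) n with hk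
  have hkIPT : HasIPT M n A k := Nat.findGreatest_spec (Nat.zero_le n) h0
  have hkn : k ≤ n := Nat.findGreatest_le n
  -- main claim: 2 * k ≥ n
  have hmain : n ≤ 2 * k := by
    by_contra hlt
    push_neg at hlt
    have hkn' : k < n := by omega
    obtain ⟨r, c, hr, hc, he, hI⟩ := hkIPT
    set T := Set.range (fun i => A (r i) (c i)) with hT
    -- there is an unused row
    have hrow : ∃ i₀ : Fin n, i₀ ∉ Set.range r := by
      by_contra h
      push_neg at h
      have hsurj : Function.Surjective r := fun i => h i
      have := Fintype.card_le_of_surjective r hsurj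
      simp at this
      omega
    obtain ⟨i₀, hi₀⟩ := hrow
    -- every entry in an unused row and unused column lies in the closure of T
    have hclo : ∀ j : Fin n, j ∉ Set.range c → A i₀ j ∈ M.closure T := by
      intro j hj
      by_cases hmem : A i₀ j ∈ T
      · exact M.subset_closure T hI.subset_ground hmem
      by_contra hnc
      have hE : A i₀ j ∈ M.E := (hA.1 i₀).2.subset_ground ⟨j, rfl⟩
      have hins : M.Indep (insert (A i₀ j) T) := by
        rw [hI.insert_indep_iff_of_notMem hmem]
        exact ⟨hE, hnc⟩
      -- build an IPT of size k+1, contradicting maximality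
      have hbig : HasIPT M n A (k + 1) := by
        refine ⟨Fin.snoc r i₀, Fin.snoc c j, snoc_inj hr hi₀, snoc_inj hc hj, ?_, ?_⟩
        · have heq : (fun i : Fin (k+1) => A ((Fin.snoc r i₀ : Fin (k+1) → Fin n) i) ((Fin.snoc c j : Fin (k+1) → Fin n) i))
              = Fin.snoc (fun i : Fin k => A (r i) (c i)) (A i₀ j) := by
            funext i
            induction i using Fin.lastCases with
            | last => simp
            | cast i => simp
          rw [heq]
          exact snoc_inj he hmem
        · have heq : (fun i : Fin (k+1) => A ((Fin.snoc r i₀ : Fin (k+1) → Fin n) i) ((Fin.snoc c j : Fin (k+1) → Fin n) i))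
              = Fin.snoc (fun i : Fin k => A (r i) (c i)) (A i₀ j) := by
            funext i
            induction i using Fin.lastCases with
            | last => simp
            | cast i => simp
          rw [heq, range_snoc]
          exact hins
      exact Nat.findGreatest_is_greatest (lt_add_one k) (by omega) hbig
    -- the set of entries of row i₀ in unused columns
    set Jset := (Set.range c)ᶜ with hJset
    set I := (A i₀) '' Jset with hIdef
    have hIindep : M.Indep I := by
      refine ((hA.1 i₀).2.indep).subset ?_
      rintro _ ⟨j, _, rfl⟩
      exact ⟨j, rfl⟩
    have hIclo : I ⊆ M.closure T := by
      rintro _ ⟨j, hj, rfl⟩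
      exact hclo j hj
    -- cardinalities
    have hTcard : T.ncard ≤ k := by
      have : T = (fun i => A (r i) (c i)) '' Set.univ := by
        rw [Set.image_univ]
      rw [this]
      calc ((fun i => A (r i) (c i)) '' Set.univ).ncard ≤ (Set.univ : Set (Fin k)).ncard :=
            Set.ncard_image_le (Set.finite_univ)
        _ = k := by simp [Set.ncard_univ]
    have hIcard : I.ncard = n - k := by
      rw [hIdef, Set.ncard_image_of_injective _ (hA.1 i₀).1]
      have h1 : (Set.range c).ncard = k := by
        rw [← Set.image_univ, Set.ncard_image_of_injective _ hc]
        simp [Set.ncard_univ]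
      have h2 : (Set.range c).ncard + Jset.ncard = n := by
        rw [hJset, Set.ncard_add_ncard_compl]
        simp [Set.ncard_univ]
      omega
    -- comparison via bases
    have hle : I.ncard ≤ T.ncard := by
      have hTI : M.IsBasis T (T ∪ I) := by
        refine hI.isBasis_of_subset_of_subset_closure Set.subset_union_left ?_
        exact Set.union_subset (M.subset_closure T hI.subset_ground) hIclo
      obtain ⟨J, hJ, hIJ⟩ := hIindep.subset_isBasis_of_subset
        (Set.subset_union_right : I ⊆ T ∪ I)
        (Set.union_subset hI.subset_ground hIindep.subset_ground)
      have hJT : J.encard = T.encard := hJ.encard_eq_encard hTI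
      have hJfin : J.Finite := by
        have : T.Finite := (Set.finite_range _)
        exact ((this.union ((Set.toFinite Jset).image _)).subset hJ.subset)
      calc I.ncard ≤ J.ncard := Set.ncard_le_ncard hIJ hJfin
        _ = T.ncard := by
            rw [Set.ncard_def, Set.ncard_def, hJT]
    omega
  have : (n + 1) / 2 ≤ k := by omega
  exact hasIPT_mono hkIPT this
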